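/- (Approximation guarantee for second-moment sorting.) Let g, K, Q be positive integers, d = K·g, C > 0, and let (Ω, 𝔽, ℙ) be a probability space carrying real random variables x_0, …, x_{d−1} with finite second moments μ_i² = 𝔼[x_i²]. Assume: (i) for every grouping f : Fin d → Fin K with all fibers of cardinality g, each group maximum max_{i ∈ f⁻¹(k)} x_i² is integrable; and (ii) the extremal-control condition holds: for every such grouping and every group G_k = f⁻¹(k), 𝔼[max_{i ∈ G_k} x_i²] ≤ C·log₂(2g)·max_{i ∈ G_k} μ_i². Let σ be a permutation of Fin d such that i ↦ μ_{σ(i)}² is antitone (descending), and let f_sort be the grouping whose group k is σ({k·g, …, k·g + g − 1}), i.e., f_sort(j) = ⌊σ⁻¹(j)/g⌋. Define ℰ(f) = (g/(12·Q²)) · Σ_k 𝔼[max_{i ∈ f⁻¹(k)} x_i²]. Then for every grouping f with all fibers of cardinality g, ℰ(f_sort) ≤ C·log₂(2g)·ℰ(f); in particular ℰ(f_sort) ≤ C·log₂(2g)·min_f ℰ(f). -/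

import Mathlib

open Finset MeasureTheory Real

/-- The fiber (group) of a grouping function `f : Fin d → Fin K` over group `k`. -/
def qFiber {d K : ℕ} (f : Fin d → Fin K) (k : Fin K) : Finset (Fin d) :=
  Finset.univ.filter fun i => f i = k

lemma qFiber_nonempty {d K g : ℕ} (hg : 0 < g) {f : Fin d → Fin K}
    (hf : ∀ k : Fin K, (qFiber f k).card = g) (k : Fin K) : (qFiber f k).Nonempty :=
  Finset.card_pos.mp (by rw [hf k]; exact hg)

/-- The second-moment-sorted grouping `f_sort(j) = ⌊σ⁻¹(j)/g⌋`, whose group `k`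
is `σ({k·g, …, k·g + g − 1})`. -/
def sortGrouping (g K d : ℕ) (hg : 0 < g) (hd : d = K * g)
    (σ : Equiv.Perm (Fin d)) (j : Fin d) : Fin K :=
  ⟨(σ⁻¹ j).val / g, (Nat.div_lt_iff_lt_mul hg).mpr (by have := (σ⁻¹ j).isLt; omega)⟩

lemma sortGrouping_fiber_nonempty (g K d : ℕ) (hg : 0 < g) (hd : d = K * g)
    (σ : Equiv.Perm (Fin d)) (k : Fin K) :
    (qFiber (sortGrouping g K d hg hd σ) k).Nonempty := by
  have hlt : k.val * g < d := by
    have hk := k.isLt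
    have h2 : k.val * g < K * g := mul_lt_mul_of_pos_right hk hg
    omega
  refine ⟨σ ⟨k.val * g, hlt⟩, ?_⟩
  simp only [qFiber, Finset.mem_filter, Finset.mem_univ, true_and]
  apply Fin.ext
  simp [sortGrouping, Nat.mul_div_cancel _ hg]

lemma comb_sorted_min (g K d : ℕ) (hg : 0 < g) (hd : d = K * g)
    (ν : Fin d → ℝ) (hν : Antitone ν)
    (S : Fin K → Finset (Fin d)) (hcard : ∀ k, (S k).card = g)
    (hdisj : ∀ k k', k ≠ k' → Disjoint (S k) (S k')) :
    ∑ k : Fin K, ν ⟨k.val * g, by rw [hd]; exact mul_lt_mul_of_pos_right k.isLt hg⟩ ≤ ∑ k : Fin K, (S k).sup' (Finset.card_pos.mp (by rw [hcard k]; exact hg)) ν := by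
  have hne : ∀ k, (S k).Nonempty := fun k => Finset.card_pos.mp (by rw [hcard k]; exact hg)
  set t : Fin K → Fin d := fun k => (S k).min' (hne k) with ht
  -- cover
  have hcover : ∀ p : Fin d, ∃ k, p ∈ S k := by
    have hcu : Finset.univ.biUnion S = Finset.univ := by
      apply Finset.eq_univ_of_card
      rw [Finset.card_biUnion (fun k _ k' _ h => hdisj k k' h)]
      simp [hcard, hd, mul_comm, Fintype.card_fin]
    intro p
    have : p ∈ Finset.univ.biUnion S := by rw [hcu]; exact Finset.mem_univ p
    simpa using this
  -- t injective
  have htinj : Function.Injective t := by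
    intro k k' h
    by_contra hne'
    have h1 : t k ∈ S k := (S k).min'_mem (hne k)
    have h2 : t k ∈ S k' := h ▸ (S k').min'_mem (hne k')
    exact (Finset.disjoint_left.mp (hdisj k k' hne') h1) h2
  -- property P
  have hP : ∀ k, (t k).val ≤ g * (Finset.univ.filter fun k' => t k' < t k).card := by
    intro k
    have hsub : Finset.Iio (t k) ⊆ (Finset.univ.filter fun k' => t k' < t k).biUnion S := by
      intro p hp
      rw [Finset.mem_Iio] at hp
      obtain ⟨k', hk'⟩ := hcover p
      refine Finset.mem_biUnion.mpr ⟨k', ?_, hk'⟩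
      simp only [Finset.mem_filter, Finset.mem_univ, true_and]
      exact lt_of_le_of_lt ((S k').min'_le p hk') hp
    calc (t k).val = (Finset.Iio (t k)).card := (Fin.card_Iio (t k)).symm
      _ ≤ ((Finset.univ.filter fun k' => t k' < t k).biUnion S).card := Finset.card_le_card hsub
      _ ≤ ∑ k' ∈ Finset.univ.filter fun k' => t k' < t k, (S k').card := Finset.card_biUnion_le
      _ = g * (Finset.univ.filter fun k' => t k' < t k).card := by
          rw [Finset.sum_congr rfl (fun k' _ => hcard k'), Finset.sum_const, smul_eq_mul, mul_comm]
  -- image of t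
  set s : Finset (Fin d) := Finset.univ.image t with hs
  have hscard : s.card = K := by
    rw [hs, Finset.card_image_of_injective _ htinj, Finset.card_univ, Fintype.card_fin]
  set e := Finset.orderEmbOfFin s hscard with he
  have hrange : ∀ k : Fin K, e k ∈ s := fun k => Finset.orderEmbOfFin_mem s hscard k
  have hsurj : ∀ y ∈ s, ∃ j : Fin K, e j = y := by
    intro y hy
    have hr := Finset.range_orderEmbOfFin s hscard
    have : y ∈ Set.range e := by rw [he, hr]; exact hy
    exact this
  -- sup' over S k equals ν (t k)
  have hsup : ∀ k, (S k).sup' (hne k) ν = ν (t k) := by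
    intro k
    apply le_antisymm
    · exact Finset.sup'_le _ _ fun i hi => hν ((S k).min'_le i hi)
    · exact Finset.le_sup' ν ((S k).min'_mem (hne k))
  -- rank: elements of s below e k number exactly k
  have hrank : ∀ k : Fin K, (s.filter fun x => x < e k).card = k.val := by
    intro k
    have : s.filter (fun x => x < e k) = (Finset.Iio k).image e := by
      ext y
      simp only [Finset.mem_filter, Finset.mem_image, Finset.mem_Iio]
      constructor
      · rintro ⟨hy, hlt⟩
        obtain ⟨j, hjy⟩ := hsurj y hy
        exact ⟨j, by rwa [← hjy, OrderEmbedding.lt_iff_lt] at hlt, hjy⟩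
      · rintro ⟨j, hj, rfl⟩
        exact ⟨hrange j, (e.strictMono hj)⟩
    rw [this, Finset.card_image_of_injective _ e.injective, Fin.card_Iio]
  -- key bound: (e k).val ≤ k * g
  have hkey : ∀ k : Fin K, (e k).val ≤ k.val * g := by
    intro k
    obtain ⟨k₀, _, hk₀⟩ := Finset.mem_image.mp (by rw [← hs]; exact hrange k)
    have hfc : (Finset.univ.filter fun k' => t k' < t k₀).card
        = (s.filter fun x => x < e k).card := by
      rw [hk₀]
      apply Finset.card_bij (fun k' _ => t k')
      · intro k' hk'
        simp only [Finset.mem_filter, Finset.mem_univ, true_and] at hk' ⊢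
        exact ⟨Finset.mem_image_of_mem t (Finset.mem_univ k'), hk'⟩
      · intro a _ b _ h; exact htinj h
      · intro y hy
        simp only [Finset.mem_filter] at hy
        obtain ⟨k', _, hk'⟩ := Finset.mem_image.mp hy.1
        exact ⟨k', by simp only [Finset.mem_filter, Finset.mem_univ, true_and]; rw [hk']; exact hy.2, hk'⟩
    have := hP k₀
    rw [hfc, hrank k, hk₀] at this
    rwa [mul_comm] at this
  -- final chain
  have hseq : s = Finset.univ.image e := by
    ext y
    simp only [Finset.mem_image, Finset.mem_univ, true_and]
    constructor
    · intro hy; exact hsurj y hy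
    · rintro ⟨j, rfl⟩; exact hrange j
  have h1 : ∑ k : Fin K, (S k).sup' (hne k) ν = ∑ k : Fin K, ν (e k) := by
    rw [Finset.sum_congr rfl (fun k _ => hsup k)]
    calc ∑ k : Fin K, ν (t k) = ∑ y ∈ s, ν y := by
          rw [hs]; exact (Finset.sum_image (fun a _ b _ h => htinj h)).symm
      _ = ∑ k : Fin K, ν (e k) := by
          rw [hseq]; exact Finset.sum_image (fun a _ b _ h => e.injective h)
  rw [h1]
  apply Finset.sum_le_sum
  intro k _
  apply hν
  show e k ≤ _
  exact Fin.mk_le_of_le_val (hkey k)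

lemma sortGrouping_fiber_card (g K d : ℕ) (hg : 0 < g) (hd : d = K * g)
    (σ : Equiv.Perm (Fin d)) (k : Fin K) :
    (qFiber (sortGrouping g K d hg hd σ) k).card = g := by
  have hlt : ∀ i : Fin g, k.val * g + i.val < d := by
    intro i
    have h1 : (k.val + 1) * g ≤ K * g := Nat.mul_le_mul_right g k.isLt
    have h2 : (k.val + 1) * g = k.val * g + g := by ring
    have := i.isLt
    omega
  have himg : qFiber (sortGrouping g K d hg hd σ) k
      = Finset.image (fun i : Fin g => σ ⟨k.val * g + i.val, hlt i⟩) Finset.univ := by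
    ext j
    simp only [qFiber, sortGrouping, Finset.mem_filter, Finset.mem_univ, true_and,
      Finset.mem_image]
    constructor
    · intro h
      have h' : (σ⁻¹ j).val / g = k.val := congrArg Fin.val (Finset.mem_filter.mp h).2
      refine ⟨⟨(σ⁻¹ j).val % g, Nat.mod_lt _ hg⟩, ?_⟩
      have hp := Nat.div_add_mod (σ⁻¹ j).val g
      have hkg : k.val * g = g * ((σ⁻¹ j).val / g) := by rw [h', mul_comm]
      have heq : (⟨k.val * g + (⟨(σ⁻¹ j).val % g, Nat.mod_lt _ hg⟩ : Fin g).val,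
          hlt ⟨(σ⁻¹ j).val % g, Nat.mod_lt _ hg⟩⟩ : Fin d) = σ⁻¹ j := by
        apply Fin.ext
        simp only
        omega
      rw [heq]
      exact σ.apply_symm_apply j
    · rintro ⟨i, rfl⟩
      refine Finset.mem_filter.mpr ⟨Finset.mem_univ _, ?_⟩
      apply Fin.ext
      show (σ⁻¹ (σ _)).val / g = k.val
      rw [Equiv.Perm.inv_def, Equiv.symm_apply_apply]
      show (k.val * g + i.val) / g = k.val
      rw [add_comm, Nat.add_mul_div_right _ _ hg, Nat.div_eq_of_lt i.isLt, zero_add]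
  rw [himg, Finset.card_image_of_injective, Finset.card_univ, Fintype.card_fin]
  intro a b hab
  have := σ.injective hab
  rw [Fin.mk.injEq] at this
  exact Fin.ext (by omega)

/-- Approximation guarantee for second-moment sorting: assuming integrability of all group
maxima and the extremal-control condition for all groupings with fibers of cardinality `g`,
the second-moment-sorted grouping `f_sort` satisfies `ℰ(f_sort) ≤ C·log₂(2g)·ℰ(f)` for
every grouping `f` with fibers of cardinality `g`, where
`ℰ(f) = (g/(12Q²)) Σ_k 𝔼[max_{i ∈ f⁻¹(k)} x_i²]`. -/
theorem second_moment_sorting_approximation_guarantee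
    (g K Q : ℕ) (hg : 0 < g) (hK : 0 < K) (hQ : 0 < Q)
    (d : ℕ) (hd : d = K * g) (C : ℝ) (hC : 0 < C)
    {Ω : Type*} [MeasurableSpace Ω] (ℙ : Measure Ω) [IsProbabilityMeasure ℙ]
    (x : Fin d → Ω → ℝ)
    (hmeas : ∀ i, Measurable (x i))
    (hsq : ∀ i, Integrable (fun ω => (x i ω) ^ 2) ℙ)
    (hint : ∀ f : Fin d → Fin K, ∀ hf : (∀ k : Fin K, (qFiber f k).card = g),
      ∀ k : Fin K, Integrable (fun ω =>
        (qFiber f k).sup' (qFiber_nonempty hg hf k) fun i => (x i ω) ^ 2) ℙ)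
    (hext : ∀ f : Fin d → Fin K, ∀ hf : (∀ k : Fin K, (qFiber f k).card = g),
      ∀ k : Fin K,
        (∫ ω, ((qFiber f k).sup' (qFiber_nonempty hg hf k) fun i => (x i ω) ^ 2) ∂ℙ) ≤
          C * Real.logb 2 (2 * g) *
            (qFiber f k).sup' (qFiber_nonempty hg hf k) fun i => ∫ ω, (x i ω) ^ 2 ∂ℙ)
    (σ : Equiv.Perm (Fin d))
    (hσ : Antitone fun i : Fin d => ∫ ω, (x (σ i) ω) ^ 2 ∂ℙ) :
    ∀ f : Fin d → Fin K, ∀ hf : (∀ k : Fin K, (qFiber f k).card = g),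
      ((g : ℝ) / (12 * (Q : ℝ) ^ 2)) *
          ∑ k : Fin K, ∫ ω,
            ((qFiber (sortGrouping g K d hg hd σ) k).sup'
              (sortGrouping_fiber_nonempty g K d hg hd σ k) fun i => (x i ω) ^ 2) ∂ℙ ≤
        C * Real.logb 2 (2 * g) *
          (((g : ℝ) / (12 * (Q : ℝ) ^ 2)) *
            ∑ k : Fin K, ∫ ω,
              ((qFiber f k).sup'
                (qFiber_nonempty hg hf k)
                fun i => (x i ω) ^ 2) ∂ℙ) := by
  intro f hf
  set μ : Fin d → ℝ := fun i => ∫ ω, (x i ω) ^ 2 ∂ℙ with hμ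
  set ν : Fin d → ℝ := fun p => μ (σ p) with hν
  have hνanti : Antitone ν := hσ
  have hfs : ∀ k : Fin K, (qFiber (sortGrouping g K d hg hd σ) k).card = g :=
    sortGrouping_fiber_card g K d hg hd σ
  set S : Fin K → Finset (Fin d) := fun k => (qFiber f k).image σ.symm with hS
  have hScard : ∀ k, (S k).card = g := fun k => by
    rw [hS, Finset.card_image_of_injective _ σ.symm.injective, hf k]
  have hSdisj : ∀ k k', k ≠ k' → Disjoint (S k) (S k') := by
    intro k k' hkk'
    rw [hS]
    rw [Finset.disjoint_image σ.symm.injective]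
    rw [Finset.disjoint_left]
    intro i hi hi'
    simp only [qFiber, Finset.mem_filter, Finset.mem_univ, true_and] at hi hi'
    exact hkk' (hi ▸ hi')
  have hSne : ∀ k, (S k).Nonempty := fun k => Finset.card_pos.mp (by rw [hScard k]; exact hg)
  have hkg : ∀ k : Fin K, k.val * g < d := fun k => by
    rw [hd]; exact mul_lt_mul_of_pos_right k.isLt hg
  -- (2) sup' over S k of ν equals sup' over fiber of μ
  have hS_sup : ∀ k, (S k).sup' (hSne k) ν = (qFiber f k).sup' (qFiber_nonempty hg hf k) μ := by
    intro k
    apply le_antisymm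
    · apply Finset.sup'_le
      intro p hp
      rw [hS] at hp
      obtain ⟨i, hi, rfl⟩ := Finset.mem_image.mp hp
      have : ν (σ.symm i) = μ i := by rw [hν]; simp
      rw [this]
      exact Finset.le_sup' μ hi
    · apply Finset.sup'_le
      intro i hi
      have hmem : σ.symm i ∈ S k := by rw [hS]; exact Finset.mem_image_of_mem _ hi
      have : μ i = ν (σ.symm i) := by rw [hν]; simp
      rw [this]
      exact Finset.le_sup' ν hmem
  -- (3) sup' over sorted fiber of μ equals ν ⟨k*g⟩
  have hsort_sup : ∀ k : Fin K,
      (qFiber (sortGrouping g K d hg hd σ) k).sup' (qFiber_nonempty hg hfs k) μ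
        = ν ⟨k.val * g, hkg k⟩ := by
    intro k
    apply le_antisymm
    · apply Finset.sup'_le
      intro j hj
      simp only [qFiber, sortGrouping, Finset.mem_filter, Finset.mem_univ, true_and] at hj
      have hj' : (σ⁻¹ j).val / g = k.val := congrArg Fin.val (Finset.mem_filter.mp hj).2
      have hle : k.val * g ≤ (σ⁻¹ j).val := by
        rw [← hj']; exact Nat.div_mul_le_self _ _
      have hμj : μ j = ν (σ⁻¹ j) := by rw [hν]; simp
      rw [hμj]
      exact hνanti (show (⟨k.val * g, hkg k⟩ : Fin d) ≤ σ⁻¹ j from hle)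
    · have hmem : σ ⟨k.val * g, hkg k⟩ ∈ qFiber (sortGrouping g K d hg hd σ) k := by
        simp only [qFiber, Finset.mem_filter, Finset.mem_univ, true_and]
        apply Fin.ext
        show (σ⁻¹ (σ _)).val / g = k.val
        rw [Equiv.Perm.inv_def, Equiv.symm_apply_apply]
        exact Nat.mul_div_cancel _ hg
      have := Finset.le_sup' μ hmem
      exact this
  -- (1) sup' of μ over fiber ≤ integral of sup'
  have hA : ∀ k, (qFiber f k).sup' (qFiber_nonempty hg hf k) μ
      ≤ ∫ ω, ((qFiber f k).sup' (qFiber_nonempty hg hf k) fun i => (x i ω) ^ 2) ∂ℙ := by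
    intro k
    apply Finset.sup'_le
    intro i hi
    exact integral_mono (hsq i) (hint f hf k) (fun ω => Finset.le_sup' (fun i => (x i ω) ^ 2) hi)
  -- (4) combinatorial lemma
  have hcomb : ∑ k : Fin K, ν ⟨k.val * g, by rw [hd]; exact mul_lt_mul_of_pos_right k.isLt hg⟩
      ≤ ∑ k : Fin K, (S k).sup' (Finset.card_pos.mp (by rw [hScard k]; exact hg)) ν :=
    comb_sorted_min g K d hg hd ν hνanti S hScard hSdisj
  -- positivity of the log factor
  have hlogpos : 0 < Real.logb 2 (2 * (g:ℝ)) := by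
    apply Real.logb_pos (by norm_num)
    have h1 : (1:ℝ) ≤ g := by exact_mod_cast hg
    linarith
  have hCL : 0 < C * Real.logb 2 (2 * (g:ℝ)) := mul_pos hC hlogpos
  -- main chain
  have hchain : ∑ k : Fin K, ∫ ω,
        ((qFiber (sortGrouping g K d hg hd σ) k).sup'
          (sortGrouping_fiber_nonempty g K d hg hd σ k) fun i => (x i ω) ^ 2) ∂ℙ
      ≤ C * Real.logb 2 (2 * g) * ∑ k : Fin K, ∫ ω,
        ((qFiber f k).sup' (qFiber_nonempty hg hf k) fun i => (x i ω) ^ 2) ∂ℙ := by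
    calc ∑ k : Fin K, ∫ ω,
          ((qFiber (sortGrouping g K d hg hd σ) k).sup'
            (sortGrouping_fiber_nonempty g K d hg hd σ k) fun i => (x i ω) ^ 2) ∂ℙ
        ≤ ∑ k : Fin K, C * Real.logb 2 (2 * g) *
            ((qFiber (sortGrouping g K d hg hd σ) k).sup' (qFiber_nonempty hg hfs k) μ) := by
          apply Finset.sum_le_sum
          intro k _
          exact hext (sortGrouping g K d hg hd σ) hfs k
      _ = C * Real.logb 2 (2 * g) * ∑ k : Fin K,
            ((qFiber (sortGrouping g K d hg hd σ) k).sup' (qFiber_nonempty hg hfs k) μ) := by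
          rw [Finset.mul_sum]
      _ ≤ C * Real.logb 2 (2 * g) * ∑ k : Fin K,
            ((qFiber f k).sup' (qFiber_nonempty hg hf k) μ) := by
          apply mul_le_mul_of_nonneg_left _ (le_of_lt hCL)
          calc ∑ k : Fin K, ((qFiber (sortGrouping g K d hg hd σ) k).sup' (qFiber_nonempty hg hfs k) μ)
              = ∑ k : Fin K, ν ⟨k.val * g, hkg k⟩ := Finset.sum_congr rfl (fun k _ => hsort_sup k)
            _ ≤ ∑ k : Fin K, (S k).sup' (hSne k) ν := hcomb
            _ = ∑ k : Fin K, ((qFiber f k).sup' (qFiber_nonempty hg hf k) μ) :=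
                Finset.sum_congr rfl (fun k _ => hS_sup k)
      _ ≤ C * Real.logb 2 (2 * g) * ∑ k : Fin K, ∫ ω,
            ((qFiber f k).sup' (qFiber_nonempty hg hf k) fun i => (x i ω) ^ 2) ∂ℙ := by
          apply mul_le_mul_of_nonneg_left _ (le_of_lt hCL)
          exact Finset.sum_le_sum (fun k _ => hA k)
  have hc : (0:ℝ) ≤ (g : ℝ) / (12 * (Q : ℝ) ^ 2) := by positivity
  calc ((g : ℝ) / (12 * (Q : ℝ) ^ 2)) * ∑ k : Fin K, ∫ ω,
        ((qFiber (sortGrouping g K d hg hd σ) k).sup'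
          (sortGrouping_fiber_nonempty g K d hg hd σ k) fun i => (x i ω) ^ 2) ∂ℙ
      ≤ ((g : ℝ) / (12 * (Q : ℝ) ^ 2)) * (C * Real.logb 2 (2 * g) * ∑ k : Fin K, ∫ ω,
        ((qFiber f k).sup' (qFiber_nonempty hg hf k) fun i => (x i ω) ^ 2) ∂ℙ) :=
        mul_le_mul_of_nonneg_left hchain hc
    _ = C * Real.logb 2 (2 * g) * (((g : ℝ) / (12 * (Q : ℝ) ^ 2)) * ∑ k : Fin K, ∫ ω,
        ((qFiber f k).sup' (qFiber_nonempty hg hf k) fun i => (x i ω) ^ 2) ∂ℙ) := by ring
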